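/- Let U be a p×d real matrix with columns u_1, …, u_d such that UᵗU = I_d (d < p), let C be a symmetric positive semidefinite p×p real matrix such that Uᵗ C U is positive definite and trace(C) − ∑_{j=1}^d u_jᵗ C u_j > 0, and let n_k > 0, π_k > 0. Then the function (Σ, β) ↦ −(n_k/2)[ trace(Σ⁻¹ Uᵗ C U) + log(det Σ) + (p−d) log β + (1/β)(trace(C) − ∑_{j=1}^d u_jᵗ C u_j) ], defined for Σ a symmetric positive definite d×d matrix and β > 0, attains its unique maximum at Σ̂ = Uᵗ C U and β̂ = (trace(C) − ∑_{j=1}^d u_jᵗ C u_j)/(p−d). -/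

import Mathlib

open Matrix

private lemma trace_eq_sum_eig' {n : Type*} [Fintype n] [DecidableEq n] {A : Matrix n n ℝ}
    (hA : A.IsHermitian) : A.trace = ∑ i, hA.eigenvalues i := by
  nth_rewrite 1 [hA.spectral_theorem]
  rw [Unitary.conjStarAlgAut_apply, Matrix.trace_mul_comm, ← mul_assoc]
  simp [Matrix.trace_diagonal]

private lemma eq_one_of_eig' {n : Type*} [Fintype n] [DecidableEq n] {B : Matrix n n ℝ}
    (hB : B.IsHermitian) (h : ∀ i, hB.eigenvalues i = 1) : B = 1 := by
  have hsp := hB.spectral_theorem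
  rw [show RCLike.ofReal ∘ hB.eigenvalues = fun _ => (1:ℝ) by funext i; simp [h i]] at hsp
  rw [hsp]
  simp [Matrix.diagonal_one]

open scoped MatrixOrder in
private lemma matrix_ineq' {d : ℕ} {A S : Matrix (Fin d) (Fin d) ℝ} (hA : A.PosDef)
    (hS : S.PosDef) :
    (Real.log A.det + d ≤ (S⁻¹ * A).trace + Real.log S.det) ∧
    ((S⁻¹ * A).trace + Real.log S.det = Real.log A.det + d → S = A) := by
  have hSi : (S⁻¹).PosDef := hS.inv
  have hR0 : (S⁻¹).PosSemidef := hSi.posSemidef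
  set R := CFC.sqrt (S⁻¹) with hRdef
  have hRH : R.IsHermitian := (CFC.sqrt_nonneg (S⁻¹)).posSemidef.1
  have hRR : R * R = S⁻¹ := CFC.sqrt_mul_sqrt_self (S⁻¹) hR0.nonneg
  have hdetR : R.det * R.det = (S⁻¹).det := by rw [← Matrix.det_mul, hRR]
  have hdetSi : 0 < (S⁻¹).det := hSi.det_pos
  have hdetRne : R.det ≠ 0 := by
    intro h; rw [h, mul_zero] at hdetR; exact hdetSi.ne' hdetR.symm
  set B := R * A * R with hBdef
  have hBsemi : B.PosSemidef := by
    have := hA.posSemidef.conjTranspose_mul_mul_same R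
    rwa [hRH.eq] at this
  have hBH : B.IsHermitian := hBsemi.1
  have hdetB : B.det = A.det * (S⁻¹).det := by
    rw [hBdef, Matrix.det_mul, Matrix.det_mul, ← hdetR]; ring
  have hdetBpos : 0 < B.det := by
    rw [hdetB]; exact mul_pos hA.det_pos hdetSi
  have hprod : B.det = ∏ i, hBH.eigenvalues i := by
    have := hBH.det_eq_prod_eigenvalues
    simpa using this
  have heigpos : ∀ i, 0 < hBH.eigenvalues i := by
    intro i
    rcases lt_or_eq_of_le (hBsemi.eigenvalues_nonneg i) with h | h
    · exact h
    · exfalso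
      have : B.det = 0 := by
        rw [hprod]; exact Finset.prod_eq_zero (Finset.mem_univ i) h.symm
      exact hdetBpos.ne' this
  have htrB : B.trace = ∑ i, hBH.eigenvalues i := trace_eq_sum_eig' hBH
  have hlogB : Real.log B.det = ∑ i, Real.log (hBH.eigenvalues i) := by
    rw [hprod]
    exact Real.log_prod (fun i _ => (heigpos i).ne')
  have htr : B.trace = (S⁻¹ * A).trace := by
    rw [hBdef, Matrix.trace_mul_comm, ← mul_assoc, hRR]
  have hlogdetB : Real.log B.det = Real.log A.det - Real.log S.det := by
    rw [hdetB, Real.log_mul hA.det_pos.ne' hdetSi.ne', Matrix.det_nonsing_inv,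
      Ring.inverse_eq_inv', Real.log_inv]
    ring
  have hkey : ∀ i, Real.log (hBH.eigenvalues i) + 1 ≤ hBH.eigenvalues i := by
    intro i
    have := Real.log_le_sub_one_of_pos (heigpos i)
    linarith
  have hsum : (d : ℝ) + Real.log B.det ≤ B.trace := by
    rw [htrB, hlogB]
    have : ∑ i, (Real.log (hBH.eigenvalues i) + 1) ≤ ∑ i, hBH.eigenvalues i :=
      Finset.sum_le_sum (fun i _ => hkey i)
    rw [Finset.sum_add_distrib] at this
    simp at this
    linarith
  constructor
  · have := hsum
    rw [htr, hlogdetB] at this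
    linarith
  · intro heq
    have hsumeq : B.trace = (d : ℝ) + Real.log B.det := by
      rw [htr, hlogdetB]; linarith
    have hall : ∀ i, hBH.eigenvalues i = 1 := by
      by_contra h
      push_neg at h
      obtain ⟨i, hi⟩ := h
      have hstrict : Real.log (hBH.eigenvalues i) + 1 < hBH.eigenvalues i := by
        have := Real.log_lt_sub_one_of_pos (heigpos i) hi
        linarith
      have : ∑ j, (Real.log (hBH.eigenvalues j) + 1) < ∑ j, hBH.eigenvalues j := by
        apply Finset.sum_lt_sum (fun j _ => hkey j) ⟨i, Finset.mem_univ i, hstrict⟩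
      rw [Finset.sum_add_distrib] at this
      simp at this
      rw [htrB, hlogB] at hsumeq
      linarith
    have hB1 : B = 1 := eq_one_of_eig' hBH hall
    have hA' : A = R⁻¹ * R⁻¹ := by
      have h1 : R⁻¹ * (R * A * R) * R⁻¹ = R⁻¹ * R⁻¹ := by
        rw [show R * A * R = (1 : Matrix (Fin d) (Fin d) ℝ) from hB1]; simp
      calc A = R⁻¹ * (R * A * R) * R⁻¹ := by
              rw [← mul_assoc, ← mul_assoc, Matrix.nonsing_inv_mul R hdetRne.isUnit,
                one_mul, mul_assoc, Matrix.mul_nonsing_inv R hdetRne.isUnit, mul_one]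
        _ = R⁻¹ * R⁻¹ := h1
    have : A = (S⁻¹)⁻¹ := by
      rw [hA', ← Matrix.mul_inv_rev, hRR]
    rw [this, Matrix.nonsing_inv_nonsing_inv S hS.det_pos.ne'.isUnit]

private lemma beta_ineq' {m c β : ℝ} (hm : 0 < m) (hc : 0 < c) (hβ : 0 < β) :
    (m * Real.log (c / m) + (1 / (c / m)) * c ≤ m * Real.log β + (1 / β) * c) ∧
    (m * Real.log (c / m) + (1 / (c / m)) * c = m * Real.log β + (1 / β) * c → β = c / m) := by
  set b := c / m with hbdef
  have hb : 0 < b := div_pos hc hm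
  set t := b / β with htdef
  have ht : 0 < t := div_pos hb hβ
  have hcb : c = m * b := by rw [hbdef]; field_simp
  have h1 : (1 / b) * c = m := by rw [hcb]; field_simp
  have h2 : (1 / β) * c = m * t := by rw [hcb, htdef]; field_simp
  have hlog : Real.log β = Real.log b - Real.log t := by
    rw [htdef, Real.log_div hb.ne' hβ.ne']; ring
  have hkey : Real.log t ≤ t - 1 := Real.log_le_sub_one_of_pos ht
  constructor
  · rw [h1, h2, hlog]
    nlinarith [hm.le]
  · intro heq
    rw [h1, h2, hlog] at heq
    have ht1 : t = 1 := by
      by_contra h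
      have := Real.log_lt_sub_one_of_pos ht h
      nlinarith
    have : b = β := by
      rw [htdef] at ht1
      field_simp at ht1
      linarith
    linarith

/-- The part of the conditional expectation of the complete log-likelihood (model
DLM_[Σ_kβ_k]) depending on the variance parameters `(Sig, β)`:
`-(n_k/2) [ trace (Sig⁻¹ A) + log det Sig + (p-d) log β + (1/β) c ]`,
where `A = Uᵗ C U` and `c = trace C - ∑ j, u_jᵗ C u_j`. -/
noncomputable def dlmVarObjective (p d : ℕ) (nk : ℝ) (A : Matrix (Fin d) (Fin d) ℝ)
    (c : ℝ) (Sig : Matrix (Fin d) (Fin d) ℝ) (β : ℝ) : ℝ :=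
  -(nk / 2) * ((Sig⁻¹ * A).trace + Real.log Sig.det
    + ((p : ℝ) - (d : ℝ)) * Real.log β + (1 / β) * c)

/-- Proposition 3 for the model DLM_[Σ_kβ_k]: the variance parameters maximizing the
objective are `Σ̂ = Uᵗ C U` and `β̂ = (trace C - ∑ j, u_jᵗ C u_j) / (p - d)`, and this
maximizer is unique. -/
theorem stmt_12 (p d : ℕ) (hdp : d < p)
    (U : Matrix (Fin p) (Fin d) ℝ) (hU : Uᵀ * U = 1)
    (C : Matrix (Fin p) (Fin p) ℝ) (hC : C.PosSemidef)
    (hUCU : (Uᵀ * C * U).PosDef)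
    (c : ℝ) (hc : c = C.trace - ∑ j : Fin d, (fun i => U i j) ⬝ᵥ C.mulVec (fun i => U i j))
    (hcpos : 0 < c)
    (nk πk : ℝ) (hnk : 0 < nk) (hπk : 0 < πk)
    (βhat : ℝ) (hβhat : βhat = c / ((p : ℝ) - (d : ℝ))) :
    ∀ (Sig : Matrix (Fin d) (Fin d) ℝ) (β : ℝ), Sig.PosDef → 0 < β →
      (dlmVarObjective p d nk (Uᵀ * C * U) c Sig β
          ≤ dlmVarObjective p d nk (Uᵀ * C * U) c (Uᵀ * C * U) βhat) ∧
      (dlmVarObjective p d nk (Uᵀ * C * U) c Sig β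
          = dlmVarObjective p d nk (Uᵀ * C * U) c (Uᵀ * C * U) βhat
        → Sig = Uᵀ * C * U ∧ β = βhat) := by
  intro Sig β hSig hβ
  set A := Uᵀ * C * U with hAdef
  have hm : 0 < (p : ℝ) - (d : ℝ) := by
    have : (d : ℝ) < (p : ℝ) := by exact_mod_cast hdp
    linarith
  set m := (p : ℝ) - (d : ℝ) with hmdef
  have hAinvA : (A⁻¹ * A).trace = (d : ℝ) := by
    rw [Matrix.nonsing_inv_mul A hUCU.det_pos.ne'.isUnit, Matrix.trace_one]
    simp
  have hmat := matrix_ineq' hUCU hSig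
  have hβhat' : βhat = c / m := by rw [hβhat, hmdef]
  have hbet := beta_ineq' hm hcpos hβ
  have hQ : ∀ (S' : Matrix (Fin d) (Fin d) ℝ) (b : ℝ),
      dlmVarObjective p d nk A c S' b
        = -(nk / 2) * ((S'⁻¹ * A).trace + Real.log S'.det + m * Real.log b + (1 / b) * c) := by
    intro S' b; rfl
  have hineq : (A⁻¹ * A).trace + Real.log A.det + m * Real.log βhat + (1 / βhat) * c
      ≤ (Sig⁻¹ * A).trace + Real.log Sig.det + m * Real.log β + (1 / β) * c := by
    have h1 := hmat.1
    have h2 := hbet.1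
    rw [hAinvA]
    rw [hβhat']
    linarith
  constructor
  · rw [hQ, hQ]
    have hnk2 : 0 < nk / 2 := by linarith
    nlinarith [hineq, hnk2]
  · intro heq
    rw [hQ, hQ] at heq
    have hnk2 : (nk / 2) ≠ 0 := by positivity
    have hQeq : (Sig⁻¹ * A).trace + Real.log Sig.det + m * Real.log β + (1 / β) * c
        = (A⁻¹ * A).trace + Real.log A.det + m * Real.log βhat + (1 / βhat) * c := by
      have := mul_left_cancel₀ (neg_ne_zero.mpr hnk2) heq
      linarith [this]
    rw [hAinvA, hβhat'] at hQeq
    have h1 := hmat.1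
    have h2 := hbet.1
    have hmeq : (Sig⁻¹ * A).trace + Real.log Sig.det = Real.log A.det + (d : ℝ) := by
      linarith
    have hbeq : m * Real.log (c / m) + (1 / (c / m)) * c = m * Real.log β + (1 / β) * c := by
      linarith
    refine ⟨hmat.2 hmeq, ?_⟩
    rw [hβhat']
    exact hbet.2 hbeq
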